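/- For all n > 0 and every Dyck path P ∈ T_{n,0,1}, mkwd(φ_{n,0,1}(P)) = flip ∘ rev ∘ sw⁻_{1,-1}(mkwd(P)). -/

import Mathlib

inductive Letter : Type
  | N : Letter
  | E : Letter
deriving DecidableEq, Repr

/-- weight of a letter: `N` has weight `r`, `E` has weight `s`. -/
def wt (r s : ℤ) : Letter → ℤ
  | Letter.N => r
  | Letter.E => s

/-- Pair each letter of the word with its `(r,s)`-level (east-north convention),
    starting from level `l`.  With `l = 0`, the `i`-th letter `wᵢ` is paired with
    `lᵢ = l_{i-1} + wt wᵢ`. -/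
def lvls (r s : ℤ) : ℤ → List Letter → List (Letter × ℤ)
  | _, [] => []
  | l, c :: w => (c, l + wt r s c) :: lvls r s (l + wt r s c) w

/-- `negBefore k k' = true` iff level `k` is swept before (or equals) level `k'`
    in the negative sweep order `-1, -2, -3, …` then `…, 3, 2, 1, 0`. -/
def negBefore (k k' : ℤ) : Bool :=
  if k < 0 then (if k' < 0 then decide (k' ≤ k) else true)
  else (if k' < 0 then false else decide (k' ≤ k))

/-- `posBefore k k' = true` iff level `k` is swept before (or equals) level `k'`
    in the positive sweep order `0, -1, -2, …` then `…, 3, 2, 1`. -/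
def posBefore (k k' : ℤ) : Bool :=
  if k ≤ 0 then (if k' ≤ 0 then decide (k' ≤ k) else true)
  else (if k' ≤ 0 then false else decide (k' ≤ k))

/-- The negative sweep map `sw⁻_{r,s}`: levels are visited in the order
    `-1, -2, …` then `…, 2, 1, 0`, and each level is scanned right-to-left;
    implemented as a stable sort of the reversed word by the level order. -/
def sweepNeg (r s : ℤ) (w : List Letter) : List Letter :=
  (((lvls r s 0 w).reverse).mergeSort (fun p q => negBefore p.2 q.2)).map Prod.fst

/-- The positive sweep map `sw⁺_{r,s}`: levels are visited in the order
    `0, -1, -2, …` then `…, 3, 2, 1`, and each level is scanned left-to-right;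
    implemented as a stable sort of the word by the level order. -/
def sweepPos (r s : ℤ) (w : List Letter) : List Letter :=
  ((lvls r s 0 w).mergeSort (fun p q => posBefore p.2 q.2)).map Prod.fst

/-- The transposition map `flip`, interchanging `N` and `E`. -/
def flipL : Letter → Letter
  | Letter.N => Letter.E
  | Letter.E => Letter.N

/-- A word is an `(r,s)`-Dyck word iff all of its levels `lᵢ` (`i ≥ 1`) are nonnegative. -/
def IsDyckWord (r s : ℤ) (w : List Letter) : Prop :=
  ∀ p ∈ lvls r s 0 w, 0 ≤ p.2

/-- The area vector `g(P) = (g₀, …, g_{n-1})` of a Dyck word (case `k = 0`, `m = 1`):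
    `gᵢ = i - xᵢ`, where `xᵢ` is the number of east steps before the `(i+1)`-th north
    step; this is the number of complete lattice squares in the strip `i ≤ y ≤ i+1`
    lying right of the path and left of the line `x = y`. -/
def areaVec (w : List Letter) : List ℤ :=
  (List.range w.length).filterMap fun p =>
    if w[p]? = some Letter.N then
      some (((w.take p).count Letter.N : ℤ) - ((w.take p).count Letter.E : ℤ))
    else none

/-- `w` encodes a Dyck path in `T_{n,0,1}`: it goes from `(0,0)` to `(n, n)` and
    never goes strictly right of the line `x = y`. -/
def IsDyckPathWord (n : ℕ) (w : List Letter) : Prop :=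
  w.count Letter.N = n ∧ w.count Letter.E = n ∧
    ∀ j : ℕ, (w.take j).count Letter.E ≤ (w.take j).count Letter.N

/-- `σ⁽ⁱ⁾`: the subword `z⁽ⁱ⁾` of the area vector consisting of entries in
    `{i, i-1}`, with entries equal to `i` replaced by `N` and entries equal to
    `i-1` replaced by `E`. -/
def sigmaT (g : List ℤ) (i : ℕ) : List Letter :=
  (g.filter (fun x => decide ((i : ℤ) - 1 ≤ x ∧ x ≤ (i : ℤ)))).map
    (fun x => if x = (i : ℤ) then Letter.N else Letter.E)

/-- The map `φ_{n,0,1}` (as a word): the concatenation `σ⁽⁰⁾ σ⁽¹⁾ ⋯ σ⁽ᴹ⁾`, where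
    `M` is the largest index with `z⁽ᴹ⁾` nonempty (namely `1` plus the largest
    entry of the area vector). -/
def phiLoehr (w : List Letter) : List Letter :=
  let g := areaVec w
  let M := (g.foldr max 0).toNat + 1
  ((List.range (M + 1)).map (fun i => sigmaT g i)).flatten

/-! ### Auxiliary definitions -/

def wsum (w : List Letter) : ℤ := (w.map (wt 1 (-1))).sum

def gvec : ℤ → List Letter → List ℤ
  | _, [] => []
  | l, Letter.N :: w => l :: gvec (l+1) w
  | l, Letter.E :: w => gvec (l-1) w

def Lfun (k : ℤ) : ℤ → List Letter → List Letter
  | _, [] => []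
  | l, Letter.N :: w =>
      (if l = k then [Letter.N] else if l = k - 1 then [Letter.E] else []) ++ Lfun k (l+1) w
  | l, Letter.E :: w => Lfun k (l-1) w

def Rfun (k : ℤ) : ℤ → List Letter → List Letter
  | _, [] => []
  | l, Letter.N :: w => (if l + 1 = k then [Letter.E] else []) ++ Rfun k (l+1) w
  | l, Letter.E :: w => (if l - 1 = k then [Letter.N] else []) ++ Rfun k (l-1) w

def keyList (B : ℕ) : List ℤ := ((List.range (B+1)).map (fun k : ℕ => (k:ℤ))).reverse

/-! ### Basic facts about `negBefore` -/

lemma negBefore_iff (a b : ℤ) : negBefore a b = true ↔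
    (a < 0 ∧ (b < 0 → b ≤ a)) ∨ (0 ≤ a ∧ 0 ≤ b ∧ b ≤ a) := by
  unfold negBefore
  split_ifs with h1 h2 h3 <;> simp <;> omega

lemma negBefore_trans (a b c : ℤ) (h1 : negBefore a b = true) (h2 : negBefore b c = true) :
    negBefore a c = true := by
  rw [negBefore_iff] at *; omega

lemma negBefore_total (a b : ℤ) : (negBefore a b || negBefore b a) = true := by
  rw [Bool.or_eq_true, negBefore_iff, negBefore_iff]; omega

lemma negBefore_antisymm (a b : ℤ) (h1 : negBefore a b = true) (h2 : negBefore b a = true) :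
    a = b := by
  rw [negBefore_iff] at *; omega

lemma negBefore_refl (a : ℤ) : negBefore a a = true := by
  rw [negBefore_iff]; omega

/-! ### The key combinatorial lemma -/

lemma wsum_cons (c : Letter) (w : List Letter) : wsum (c :: w) = wt 1 (-1) c + wsum w := by
  simp [wsum]

lemma LR (k : ℤ) : ∀ (w : List Letter) (l : ℤ),
    (if k < l then [Letter.N] else []) ++ Lfun k l w
      = Rfun k l w ++ (if k < l + wsum w then [Letter.N] else []) := by
  intro w
  induction w with
  | nil => intro l; simp [Lfun, Rfun, wsum]
  | cons c w ih =>
    intro l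
    cases c with
    | N =>
      have h := ih (l+1)
      have hs : l + wsum (Letter.N :: w) = (l+1) + wsum w := by rw [wsum_cons]; simp [wt]; ring
      rw [show Lfun k l (Letter.N :: w) =
          (if l = k then [Letter.N] else if l = k - 1 then [Letter.E] else []) ++ Lfun k (l+1) w
          from rfl,
        show Rfun k l (Letter.N :: w) = (if l + 1 = k then [Letter.E] else []) ++ Rfun k (l+1) w
          from rfl, hs]
      by_cases h1 : l = k
      · rw [if_pos h1, if_neg (show ¬ k < l by omega), if_neg (show ¬ l + 1 = k by omega)]
        rw [if_pos (show k < l + 1 by omega)] at h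
        simpa using h
      · by_cases h2 : l = k - 1
        · rw [if_neg h1, if_pos h2, if_neg (show ¬ k < l by omega),
            if_pos (show l + 1 = k by omega)]
          rw [if_neg (show ¬ k < l + 1 by omega)] at h
          simp only [List.nil_append] at h
          simp [h]
        · by_cases h3 : k < l
          · rw [if_pos h3, if_neg h1, if_neg h2, if_neg (show ¬ l + 1 = k by omega)]
            rw [if_pos (show k < l + 1 by omega)] at h
            simpa using h
          · rw [if_neg h3, if_neg h1, if_neg h2, if_neg (show ¬ l + 1 = k by omega)]
            rw [if_neg (show ¬ k < l + 1 by omega)] at h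
            simpa using h
    | E =>
      have h := ih (l-1)
      have hs : l + wsum (Letter.E :: w) = (l-1) + wsum w := by rw [wsum_cons]; simp [wt]; ring
      rw [show Lfun k l (Letter.E :: w) = Lfun k (l-1) w from rfl,
        show Rfun k l (Letter.E :: w) = (if l - 1 = k then [Letter.N] else []) ++ Rfun k (l-1) w
          from rfl, hs]
      by_cases h1 : l - 1 = k
      · rw [if_pos (show k < l by omega), if_pos h1]
        rw [if_neg (show ¬ k < l - 1 by omega)] at h
        simp only [List.nil_append] at h
        simp [h]
      · by_cases h2 : k < l - 1
        · rw [if_pos (show k < l by omega), if_neg h1]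
          rw [if_pos h2] at h
          simpa using h
        · rw [if_neg (show ¬ k < l by omega), if_neg h1]
          rw [if_neg h2] at h
          simpa using h
/-! ### `Rfun` and `Lfun` as filters -/

lemma Rfun_eq (k : ℤ) : ∀ (w : List Letter) (l : ℤ),
    Rfun k l w = ((lvls 1 (-1) l w).filter (fun p => decide (p.2 = k))).map
      (fun p => flipL p.1) := by
  intro w
  induction w with
  | nil => intro l; rfl
  | cons c w ih =>
    intro l
    cases c with
    | N =>
      rw [show Rfun k l (Letter.N :: w) = (if l + 1 = k then [Letter.E] else []) ++ Rfun k (l+1) w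
          from rfl,
        show lvls 1 (-1) l (Letter.N :: w) = (Letter.N, l + 1) :: lvls 1 (-1) (l+1) w by
          simp [lvls, wt]]
      rw [List.filter_cons]
      by_cases h : l + 1 = k
      · simp [h, flipL, ih]
      · simp [h, ih]
    | E =>
      rw [show Rfun k l (Letter.E :: w) = (if l - 1 = k then [Letter.N] else []) ++ Rfun k (l-1) w
          from rfl,
        show lvls 1 (-1) l (Letter.E :: w) = (Letter.E, l - 1) :: lvls 1 (-1) (l-1) w by
          simp [lvls, wt, sub_eq_add_neg]]
      rw [List.filter_cons]
      by_cases h : l - 1 = k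
      · simp [h, flipL, ih]
      · simp [h, ih]

lemma Lfun_eq (k : ℤ) : ∀ (w : List Letter) (l : ℤ),
    Lfun k l w = ((gvec l w).filter (fun x => decide (k - 1 ≤ x ∧ x ≤ k))).map
      (fun x => if x = k then Letter.N else Letter.E) := by
  intro w
  induction w with
  | nil => intro l; rfl
  | cons c w ih =>
    intro l
    cases c with
    | N =>
      rw [show Lfun k l (Letter.N :: w) =
          (if l = k then [Letter.N] else if l = k - 1 then [Letter.E] else []) ++ Lfun k (l+1) w
          from rfl,
        show gvec l (Letter.N :: w) = l :: gvec (l+1) w from rfl]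
      rw [List.filter_cons]
      by_cases h1 : l = k
      · have hc : (decide (k - 1 ≤ l ∧ l ≤ k)) = true := by rw [decide_eq_true_eq]; omega
        rw [if_pos h1, if_pos hc, List.map_cons, ih (l+1)]
        simp only [if_pos h1, List.singleton_append]
      · by_cases h2 : l = k - 1
        · have hc : (decide (k - 1 ≤ l ∧ l ≤ k)) = true := by rw [decide_eq_true_eq]; omega
          rw [if_neg h1, if_pos h2, if_pos hc, List.map_cons, ih (l+1)]
          simp only [if_neg h1, List.singleton_append]
        · have hc : (decide (k - 1 ≤ l ∧ l ≤ k)) = false := by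
            rw [decide_eq_false_iff_not]; omega
          rw [if_neg h1, if_neg h2, if_neg (by rw [hc]; exact Bool.false_ne_true), ih (l+1),
            List.nil_append]
    | E =>
      rw [show Lfun k l (Letter.E :: w) = Lfun k (l-1) w from rfl,
        show gvec l (Letter.E :: w) = gvec (l-1) w from rfl]
      exact ih (l-1)

/-! ### `areaVec` and `gvec` -/

lemma filterMap_congr' {α β : Type*} (f g : α → Option β) :
    ∀ (l : List α), (∀ a ∈ l, f a = g a) → l.filterMap f = l.filterMap g := by
  intro l
  induction l with
  | nil => intro _; rfl
  | cons a l ih =>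
    intro h
    rw [List.filterMap_cons, List.filterMap_cons, h a List.mem_cons_self,
      ih (fun b hb => h b (List.mem_cons_of_mem a hb))]

lemma areaVec_cons (c : Letter) (w : List Letter) :
    areaVec (c :: w) =
      (if c = Letter.N then [(0:ℤ)] else []) ++ (areaVec w).map (fun x => x + wt 1 (-1) c) := by
  unfold areaVec
  rw [List.length_cons, List.range_succ_eq_map, List.filterMap_cons, List.filterMap_map,
    List.map_filterMap]
  have hfun : ∀ p ∈ List.range w.length,
      ((fun p => if (c :: w)[p]? = some Letter.N then
          some ((((c :: w).take p).count Letter.N : ℤ) - (((c :: w).take p).count Letter.E : ℤ))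
        else none) ∘ Nat.succ) p =
      (fun p => Option.map (fun x => x + wt 1 (-1) c)
        (if w[p]? = some Letter.N then
          some (((w.take p).count Letter.N : ℤ) - ((w.take p).count Letter.E : ℤ))
        else none)) p := by
    intro p _
    simp only [Function.comp_apply, List.getElem?_cons_succ, Nat.succ_eq_add_one,
      List.take_succ_cons]
    by_cases h : w[p]? = some Letter.N
    · rw [if_pos h, if_pos h, Option.map_some]
      cases c <;> simp [List.count_cons, wt] <;> push_cast <;> ring
    · rw [if_neg h, if_neg h, Option.map_none]
  rw [filterMap_congr' _ _ _ hfun]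
  cases c <;> simp

lemma gvec_eq : ∀ (w : List Letter) (l : ℤ), gvec l w = (areaVec w).map (fun x => x + l) := by
  intro w
  induction w with
  | nil => intro l; rw [show areaVec [] = [] from rfl]; rfl
  | cons c w ih =>
    intro l
    cases c with
    | N =>
      rw [show gvec l (Letter.N :: w) = l :: gvec (l+1) w from rfl, areaVec_cons, ih (l+1)]
      simp only [if_pos rfl, wt, List.map_append, List.map_cons, List.map_nil, List.map_map,
        List.singleton_append, List.nil_append]
      refine congrArg₂ List.cons (by ring) (List.map_congr_left ?_)
      intro x _
      simp only [Function.comp_apply]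
      ring
    | E =>
      rw [show gvec l (Letter.E :: w) = gvec (l-1) w from rfl, areaVec_cons, ih (l-1)]
      rw [if_neg (by decide), List.nil_append, List.map_map]
      apply List.map_congr_left
      intro x _
      simp only [Function.comp_apply, wt]
      ring

lemma areaVec_eq_gvec (w : List Letter) : areaVec w = gvec 0 w := by
  rw [gvec_eq]; simp

/-! ### level bounds -/

lemma lvls_mem_exists : ∀ (w : List Letter) (l : ℤ) (p : Letter × ℤ), p ∈ lvls 1 (-1) l w →
    ∃ j, p.2 = l + ((w.take j).count Letter.N : ℤ) - ((w.take j).count Letter.E : ℤ) := by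
  intro w
  induction w with
  | nil => intro l p hp; simp [lvls] at hp
  | cons c w ih =>
    intro l p hp
    rw [lvls] at hp
    rcases List.mem_cons.1 hp with h | h
    · refine ⟨1, ?_⟩
      subst h
      cases c <;> simp [wt, List.count_cons] <;> omega
    · obtain ⟨j, hj⟩ := ih _ _ h
      refine ⟨j+1, ?_⟩
      rw [hj]
      cases c <;> simp [wt, List.take_succ_cons, List.count_cons] <;> push_cast <;> ring

lemma lvls_le : ∀ (w : List Letter) (l B : ℤ), l ≤ B + 1 → (∀ x ∈ gvec l w, x ≤ B) →
    ∀ p ∈ lvls 1 (-1) l w, p.2 ≤ B + 1 := by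
  intro w
  induction w with
  | nil => intro l B _ _ p hp; simp [lvls] at hp
  | cons c w ih =>
    intro l B hl hg p hp
    rw [lvls] at hp
    cases c with
    | N =>
      have hlB : l ≤ B := hg l (by rw [show gvec l (Letter.N :: w) = l :: gvec (l+1) w from rfl]; simp)
      rcases List.mem_cons.1 hp with h | h
      · subst h; simp [wt]; omega
      · exact ih (l+1) B (by omega)
          (fun x hx => hg x (by rw [show gvec l (Letter.N :: w) = l :: gvec (l+1) w from rfl]; simp [hx])) p h
    | E =>
      rcases List.mem_cons.1 hp with h | h
      · subst h; simp [wt]; omega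
      · exact ih (l-1) B (by omega)
          (fun x hx => hg x (by rwa [show gvec l (Letter.E :: w) = gvec (l-1) w from rfl])) p h

lemma le_foldr_max : ∀ (g : List ℤ) (x : ℤ), x ∈ g → x ≤ g.foldr max 0 := by
  intro g
  induction g with
  | nil => simp
  | cons a g ih =>
    intro x hx
    rcases List.mem_cons.1 hx with h | h
    · subst h; exact le_max_left _ _
    · exact le_trans (ih x h) (le_max_right _ _)

lemma foldr_max_nonneg : ∀ g : List ℤ, 0 ≤ g.foldr max 0 := by
  intro g
  induction g with
  | nil => simp
  | cons a g ih => exact le_trans ih (le_max_right _ _)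

lemma wsum_eq : ∀ w : List Letter, wsum w = (w.count Letter.N : ℤ) - (w.count Letter.E : ℤ) := by
  intro w
  induction w with
  | nil => simp [wsum]
  | cons c w ih =>
    rw [wsum_cons, ih]
    cases c <;> simp [wt, List.count_cons] <;> push_cast <;> ring
/-! ### `keyList` facts -/

lemma mem_keyList {B : ℕ} {k : ℤ} : k ∈ keyList B ↔ 0 ≤ k ∧ k ≤ (B:ℤ) := by
  rw [keyList, List.mem_reverse, List.mem_map]
  constructor
  · rintro ⟨a, ha, rfl⟩
    rw [List.mem_range] at ha
    omega
  · rintro ⟨h1, h2⟩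
    exact ⟨k.toNat, List.mem_range.2 (by omega), by omega⟩

lemma keyList_nodup (B : ℕ) : (keyList B).Nodup := by
  rw [keyList, List.nodup_reverse]
  exact List.Nodup.map (fun a b h => by exact_mod_cast h) List.nodup_range

lemma keyList_pairwise (B : ℕ) :
    List.Pairwise (fun k k' => negBefore k k' = true) (keyList B) := by
  rw [keyList, List.pairwise_reverse]
  rw [List.pairwise_map]
  apply (List.pairwise_lt_range (n := B+1)).imp
  intro a b h
  rw [negBefore_iff]
  right
  exact ⟨by positivity, by positivity, by exact_mod_cast h.le⟩

/-! ### uniqueness of stable sorts -/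

lemma pairwise_of_forall_mem' {α : Type*} {R : α → α → Prop} :
    ∀ (l : List α), (∀ a ∈ l, ∀ b ∈ l, R a b) → l.Pairwise R := by
  intro l
  induction l with
  | nil => intro _; exact List.Pairwise.nil
  | cons a l ih =>
    intro h
    refine List.pairwise_cons.2 ⟨fun b hb => h a List.mem_cons_self b (List.mem_cons_of_mem a hb), ?_⟩
    exact ih fun x hx y hy => h x (List.mem_cons_of_mem a hx) y (List.mem_cons_of_mem a hy)

lemma stable_sort_unique {α : Type*} (key : α → ℤ) :
    ∀ (l₁ l₂ : List α), l₁.Perm l₂ →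
      l₁.Pairwise (fun a b => negBefore (key a) (key b) = true) →
      l₂.Pairwise (fun a b => negBefore (key a) (key b) = true) →
      (∀ k : ℤ, l₁.filter (fun a => decide (key a = k)) = l₂.filter (fun a => decide (key a = k))) →
      l₁ = l₂ := by
  intro l₁
  induction l₁ with
  | nil =>
    intro l₂ hp _ _ _
    have := hp.length_eq
    cases l₂ with
    | nil => rfl
    | cons b t => simp at this
  | cons a t₁ ih =>
    intro l₂ hp h₁ h₂ hf
    cases l₂ with
    | nil => have := hp.length_eq; simp at this
    | cons b t₂ =>
      have hab : key a = key b := by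
        have ha : a ∈ b :: t₂ := hp.mem_iff.1 List.mem_cons_self
        rcases List.mem_cons.1 ha with h | h
        · rw [h]
        · have hba : negBefore (key b) (key a) = true := (List.pairwise_cons.1 h₂).1 a h
          have hb : b ∈ a :: t₁ := hp.mem_iff.2 List.mem_cons_self
          rcases List.mem_cons.1 hb with h' | h'
          · rw [h']
          · exact negBefore_antisymm _ _ ((List.pairwise_cons.1 h₁).1 b h') hba
      have hfa := hf (key a)
      rw [List.filter_cons, List.filter_cons, if_pos (by simp), if_pos (by simp [hab])] at hfa
      obtain ⟨hab2, -⟩ := List.cons_eq_cons.1 hfa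
      subst hab2
      have hperm : t₁.Perm t₂ := hp.cons_inv
      refine congrArg (List.cons a) (ih t₂ hperm (List.pairwise_cons.1 h₁).2
        (List.pairwise_cons.1 h₂).2 ?_)
      intro k
      have hk := hf k
      rw [List.filter_cons, List.filter_cons] at hk
      by_cases hka : key a = k
      · rw [if_pos (by simp [hka]), if_pos (by simp [hka])] at hk
        exact (List.cons_eq_cons.1 hk).2
      · rwa [if_neg (by simp [hka]), if_neg (by simp [hka])] at hk

/-! ### flatten of per-key filters -/

lemma flatten_filter_perm {α : Type*} (key : α → ℤ) :
    ∀ (ks : List ℤ) (xs : List α), ks.Nodup → (∀ x ∈ xs, key x ∈ ks) →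
      ((ks.map (fun k => xs.filter (fun a => decide (key a = k)))).flatten).Perm xs := by
  intro ks
  induction ks with
  | nil =>
    intro xs _ h
    have : xs = [] := List.eq_nil_iff_forall_not_mem.2 (fun x hx => by simpa using h x hx)
    subst this
    simp
  | cons k ks ih =>
    intro xs hnd h
    rw [List.map_cons, List.flatten_cons]
    have hstep : ∀ k' ∈ ks, xs.filter (fun a => decide (key a = k')) =
        (xs.filter (fun a => !(decide (key a = k)))).filter (fun a => decide (key a = k')) := by
      intro k' hk'
      have hkk : k' ≠ k := by rintro rfl; exact (List.nodup_cons.1 hnd).1 hk'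
      rw [List.filter_filter]
      apply List.filter_congr
      intro x _
      by_cases hx' : key x = k' <;> simp [hx', hkk]
    rw [List.map_congr_left hstep]
    have hmain : ((ks.map (fun k' => (xs.filter (fun a => !(decide (key a = k)))).filter
        (fun a => decide (key a = k')))).flatten).Perm (xs.filter (fun a => !(decide (key a = k)))) := by
      apply ih _ (List.nodup_cons.1 hnd).2
      intro x hx
      obtain ⟨hx1, hx2⟩ := List.mem_filter.1 hx
      have hx3 : key x ≠ k := by simpa using hx2
      rcases List.mem_cons.1 (h x hx1) with h' | h'
      · exact absurd h' hx3
      · exact h'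
    exact (hmain.append_left _).trans (List.filter_append_perm _ xs)
lemma flatten_single {α : Type*} (g : List α) :
    ∀ (ks : List ℤ) (k : ℤ), ks.Nodup →
      ((ks.map (fun k' => if k' = k then g else [])).flatten) = if k ∈ ks then g else [] := by
  intro ks
  induction ks with
  | nil => intro k _; simp
  | cons k' ks ih =>
    intro k hnd
    rw [List.map_cons, List.flatten_cons, ih k (List.nodup_cons.1 hnd).2]
    by_cases h : k' = k
    · subst h
      rw [if_pos rfl, if_neg (List.nodup_cons.1 hnd).1, if_pos List.mem_cons_self,
        List.append_nil]
    · rw [if_neg h, List.nil_append]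
      by_cases h2 : k ∈ ks
      · rw [if_pos h2, if_pos (List.mem_cons_of_mem _ h2)]
      · rw [if_neg h2, if_neg (fun hm => by
          rcases List.mem_cons.1 hm with h' | h'
          · exact h h'.symm
          · exact h2 h')]

lemma mergeSort_eq_flatten {α : Type*} (key : α → ℤ) (xs : List α) (B : ℕ)
    (hb : ∀ x ∈ xs, 0 ≤ key x ∧ key x ≤ (B:ℤ)) :
    xs.mergeSort (fun a b => negBefore (key a) (key b)) =
      ((keyList B).map (fun k => xs.filter (fun a => decide (key a = k)))).flatten := by
  have trans : ∀ a b c : α, negBefore (key a) (key b) = true →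
      negBefore (key b) (key c) = true → negBefore (key a) (key c) = true :=
    fun a b c h1 h2 => negBefore_trans _ _ _ h1 h2
  have total : ∀ a b : α, (negBefore (key a) (key b) || negBefore (key b) (key a)) = true :=
    fun a b => negBefore_total _ _
  have hfk : ∀ (k : ℤ), (xs.mergeSort (fun a b => negBefore (key a) (key b))).filter
      (fun a => decide (key a = k)) = xs.filter (fun a => decide (key a = k)) := by
    intro k
    have hpw : (xs.filter (fun a => decide (key a = k))).Pairwise
        (fun a b => negBefore (key a) (key b) = true) := by
      apply pairwise_of_forall_mem'
      intro a ha b hbm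
      have h1 : key a = k := by simpa using (List.mem_filter.1 ha).2
      have h2 : key b = k := by simpa using (List.mem_filter.1 hbm).2
      rw [h1, h2]; exact negBefore_refl k
    have hsub : (xs.filter (fun a => decide (key a = k))).Sublist
        (xs.mergeSort (fun a b => negBefore (key a) (key b))) :=
      List.sublist_mergeSort trans total hpw List.filter_sublist
    have hsub2 := hsub.filter (fun a => decide (key a = k))
    have hfix : (xs.filter (fun a => decide (key a = k))).filter (fun a => decide (key a = k))
        = xs.filter (fun a => decide (key a = k)) := by
      simp [List.filter_filter]
    rw [hfix] at hsub2
    have hlen : ((xs.mergeSort (fun a b => negBefore (key a) (key b))).filter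
        (fun a => decide (key a = k))).length = (xs.filter (fun a => decide (key a = k))).length :=
      ((List.mergeSort_perm xs _).filter _).length_eq
    exact (hsub2.eq_of_length hlen.symm).symm
  apply stable_sort_unique key
  · exact (List.mergeSort_perm xs _).trans (flatten_filter_perm key (keyList B) xs
      (keyList_nodup B) (fun x hx => mem_keyList.2 ⟨(hb x hx).1, (hb x hx).2⟩)).symm
  · exact List.pairwise_mergeSort trans total xs
  · rw [List.pairwise_flatten]
    constructor
    · intro l hl
      rcases List.mem_map.1 hl with ⟨k, _, rfl⟩
      apply pairwise_of_forall_mem'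
      intro a ha b hbm
      have h1 : key a = k := by simpa using (List.mem_filter.1 ha).2
      have h2 : key b = k := by simpa using (List.mem_filter.1 hbm).2
      rw [h1, h2]; exact negBefore_refl k
    · rw [List.pairwise_map]
      apply (keyList_pairwise B).imp
      intro k k' h x hx y hy
      have h1 : key x = k := by simpa using (List.mem_filter.1 hx).2
      have h2 : key y = k' := by simpa using (List.mem_filter.1 hy).2
      rw [h1, h2]; exact h
  · intro k
    rw [hfk k, List.filter_flatten, List.map_map]
    have hblocks : ∀ k' ∈ keyList B,
        ((List.filter (fun a => decide (key a = k))) ∘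
          (fun k' => xs.filter (fun a => decide (key a = k')))) k' =
        (fun k'' => if k'' = k then xs.filter (fun a => decide (key a = k)) else []) k' := by
      intro k' _
      simp only [Function.comp_apply]
      by_cases h : k' = k
      · subst h
        rw [if_pos rfl]
        simp [List.filter_filter, Bool.and_comm]
      · rw [if_neg h, List.filter_eq_nil_iff]
        intro x hx
        have h2 : key x = k' := by simpa using (List.mem_filter.1 hx).2
        simp [h2, h]
    rw [List.map_congr_left hblocks, flatten_single _ (keyList B) k (keyList_nodup B)]
    by_cases hk : k ∈ keyList B
    · rw [if_pos hk]
    · rw [if_neg hk, List.filter_eq_nil_iff]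
      intro x hx
      have := hb x hx
      simp only [decide_eq_true_eq]
      intro heq
      exact hk (mem_keyList.2 ⟨heq ▸ this.1, heq ▸ this.2⟩)
lemma rhs_eq (w : List Letter) (M : ℕ) :
    (((((keyList M).map (fun k => ((lvls 1 (-1) 0 w).reverse).filter
        (fun p => decide (p.2 = k)))).flatten).map Prod.fst).reverse).map flipL
      = ((List.range (M+1)).map (fun i : ℕ => Rfun (i:ℤ) 0 w)).flatten := by
  rw [← List.map_reverse, List.map_map, List.reverse_flatten, List.map_map,
    ← List.map_reverse, keyList, List.reverse_reverse, List.map_map, List.map_flatten,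
    List.map_map]
  refine congrArg List.flatten (List.map_congr_left ?_)
  intro i _
  simp only [Function.comp_apply]
  rw [List.filter_reverse, List.reverse_reverse, Rfun_eq]
  rfl

/-- For all `n > 0` and every Dyck path `P ∈ T_{n,0,1}`,
    `mkwd(φ_{n,0,1}(P)) = flip ∘ rev ∘ sw⁻_{1,-1}(mkwd(P))`. -/
theorem phiLoehr_eq_sweep (n : ℕ) (hn : 0 < n)
    (w : List Letter) (hw : IsDyckPathWord n w) :
    phiLoehr w = ((sweepNeg 1 (-1) w).reverse).map flipL := by
  obtain ⟨hN, hE, hpre⟩ := hw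
  have hnonneg : ∀ p ∈ lvls 1 (-1) 0 w, 0 ≤ p.2 := by
    intro p hp
    obtain ⟨j, hj⟩ := lvls_mem_exists w 0 p hp
    have h1 := hpre j
    omega
  set M : ℕ := ((areaVec w).foldr max 0).toNat + 1 with hM
  have hupper : ∀ p ∈ lvls 1 (-1) 0 w, p.2 ≤ (M:ℤ) := by
    intro p hp
    have h1 : ∀ x ∈ gvec 0 w, x ≤ (areaVec w).foldr max 0 := by
      intro x hx
      exact le_foldr_max _ x (by rwa [areaVec_eq_gvec])
    have h2 := lvls_le w 0 ((areaVec w).foldr max 0)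
      (by have := foldr_max_nonneg (areaVec w); omega) h1 p hp
    have h3 := Int.self_le_toNat ((areaVec w).foldr max 0)
    rw [hM]
    push_cast
    omega
  have hzero : wsum w = 0 := by rw [wsum_eq, hN, hE]; ring
  have hsig : ∀ i : ℕ, sigmaT (areaVec w) i = Rfun (i:ℤ) 0 w := by
    intro i
    have h := LR (i:ℤ) w 0
    rw [hzero, if_neg (show ¬((i:ℤ) < 0) by omega),
      if_neg (show ¬((i:ℤ) < 0 + 0) by omega)] at h
    simp only [List.nil_append, List.append_nil] at h
    rw [show sigmaT (areaVec w) i = Lfun (i:ℤ) 0 w by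
      rw [Lfun_eq, ← areaVec_eq_gvec]; rfl]
    exact h
  have hms := mergeSort_eq_flatten Prod.snd ((lvls 1 (-1) 0 w).reverse) M
    (fun x hx => by
      rw [List.mem_reverse] at hx
      exact ⟨hnonneg x hx, hupper x hx⟩)
  have hsw : sweepNeg 1 (-1) w =
      (((keyList M).map (fun k => ((lvls 1 (-1) 0 w).reverse).filter
        (fun p => decide (p.2 = k)))).flatten).map Prod.fst := by
    unfold sweepNeg
    rw [hms]
  rw [hsw, rhs_eq w M]
  show ((List.range (M+1)).map (fun i => sigmaT (areaVec w) i)).flatten = _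
  exact congrArg List.flatten (List.map_congr_left (fun i _ => hsig i))
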